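/- arXiv:1206.2260 — 6 statements merged into one kernel-verified Lean document; each statement's English description precedes it below -/
import Mathlib

section
/- Let M be a matrix over F_q with columns indexed by E, and let e be a column that is neither a loop (zero column) nor a coloop (contained in every maximal independent set of columns). Define g_M(q) to be the number of vectors y in ker(M) over F_q with supp(y) = E. Then g_M(q) = g_{M/e}(q) - g_{M-e}(q), where M-e deletes the column e and M/e is the image of the remaining columns in the quotient space by the span of e. -/
/-- Deletion–contraction for the count of full-support kernel vectors:
if the column `e` of `M` is neither a loop (zero column) nor a coloop (it lies in the
span of the other columns), then `g_M(q) = g_{M/e}(q) - g_{M-e}(q)`.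
Here a full-support kernel vector of the deletion `M - e` is encoded as a vector `y`
with `y e = 0`, all other coordinates nonzero and `M y = 0`; and a full-support kernel
vector of the contraction `M/e` (quotient by the span of column `e`) is encoded as a
vector `y` with `y e = 0`, all other coordinates nonzero and `M y ∈ span {column e}`. -/
theorem deletion_contraction_full_support_kernel {q : ℕ} [Fact (Nat.Prime q)]
    {m E : Type*} [Fintype m] [Fintype E] [DecidableEq E]
    (A : Matrix m E (ZMod q)) (e : E)
    (h_not_loop : A.transpose e ≠ 0)
    (h_not_coloop : A.transpose e ∈
      Submodule.span (ZMod q) (A.transpose '' {f : E | f ≠ e})) :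
    (Nat.card {y : E → ZMod q // A.mulVec y = 0 ∧ ∀ f, y f ≠ 0} : ℤ) =
      (Nat.card {y : E → ZMod q // y e = 0 ∧
          A.mulVec y ∈ Submodule.span (ZMod q) {A.transpose e} ∧
          ∀ f, f ≠ e → y f ≠ 0} : ℤ) -
      (Nat.card {y : E → ZMod q // y e = 0 ∧ A.mulVec y = 0 ∧
          ∀ f, f ≠ e → y f ≠ 0} : ℤ) := by
  classical
  set v := A.transpose e with hv
  have key : ∀ z : E → ZMod q,
      A.mulVec (Function.update z e 0) = A.mulVec z - z e • v := by
    intro z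
    have hz : Function.update z e 0 = z - z e • (Pi.single e 1 : E → ZMod q) := by
      funext f; by_cases h : f = e <;> simp [h, Function.update]
    rw [hz, Matrix.mulVec_sub, Matrix.mulVec_smul]
    congr 1
    ext i
    simp [Matrix.mulVec_single, Matrix.transpose, hv]
  have hcancel : ∀ c d : ZMod q, c • v = d • v → c = d := by
    intro c d h
    have : (c - d) • v = 0 := by rw [sub_smul, h, sub_self]
    rcases smul_eq_zero.mp this with h' | h'
    · exact sub_eq_zero.mp h'
    · exact absurd h' h_not_loop
  let φ : ({y : E → ZMod q // A.mulVec y = 0 ∧ ∀ f, y f ≠ 0} ⊕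
      {y : E → ZMod q // y e = 0 ∧ A.mulVec y = 0 ∧ ∀ f, f ≠ e → y f ≠ 0}) →
      {y : E → ZMod q // y e = 0 ∧ A.mulVec y ∈ Submodule.span (ZMod q) {v} ∧
        ∀ f, f ≠ e → y f ≠ 0} :=
    fun a => match a with
    | Sum.inl ⟨z, hz0, hzf⟩ => ⟨Function.update z e 0, Function.update_self e 0 z, by
        rw [key, hz0, zero_sub]
        exact Submodule.neg_mem _
          (Submodule.smul_mem _ _ (Submodule.mem_span_singleton_self v)),
        fun f hf => by rw [Function.update_of_ne hf]; exact hzf f⟩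
    | Sum.inr ⟨z, hz0, hzk, hzf⟩ => ⟨z, hz0, by rw [hzk]; exact Submodule.zero_mem _, hzf⟩
  have hinj : Function.Injective φ := by
    rintro (⟨z, hz0, hzf⟩ | ⟨z, hz0, hzk, hzf⟩) (⟨w, hw0, hwf⟩ | ⟨w, hw0, hwk, hwf⟩) h
    · have h' : Function.update z e 0 = Function.update w e 0 :=
        congrArg Subtype.val h
      have h2 : A.mulVec (Function.update z e 0) = A.mulVec (Function.update w e 0) := by
        rw [h']
      rw [key, key, hz0, hw0, zero_sub, zero_sub] at h2
      have hze : z e = w e := hcancel _ _ (neg_injective h2)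
      refine congrArg Sum.inl (Subtype.ext ?_)
      funext f
      by_cases hf : f = e
      · rw [hf]; exact hze
      · have := congrFun h' f
        rwa [Function.update_of_ne hf, Function.update_of_ne hf] at this
    · exfalso
      have h' : Function.update z e 0 = w := congrArg Subtype.val h
      have h2 : A.mulVec (Function.update z e 0) = 0 := by rw [h', hwk]
      rw [key, hz0, zero_sub, neg_eq_zero] at h2
      exact absurd h2 (smul_ne_zero (hzf e) h_not_loop)
    · exfalso
      have h' : z = Function.update w e 0 := congrArg Subtype.val h
      have h2 : A.mulVec (Function.update w e 0) = 0 := by rw [← h', hzk]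
      rw [key, hw0, zero_sub, neg_eq_zero] at h2
      exact absurd h2 (smul_ne_zero (hwf e) h_not_loop)
    · have h' : z = w := congrArg Subtype.val h
      exact congrArg Sum.inr (Subtype.ext h')
  have hsurj : Function.Surjective φ := by
    rintro ⟨y, hy0, hyspan, hyf⟩
    obtain ⟨c, hc⟩ := Submodule.mem_span_singleton.mp hyspan
    by_cases hc0 : c = 0
    · refine ⟨Sum.inr ⟨y, hy0, ?_, hyf⟩, rfl⟩
      rw [← hc, hc0, zero_smul]
    · have hyz : Function.update (Function.update y e (-c)) e 0 = y := by
        funext f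
        by_cases hf : f = e
        · rw [hf, Function.update_self, hy0]
        · rw [Function.update_of_ne hf, Function.update_of_ne hf]
      have hk := key (Function.update y e (-c))
      rw [hyz, Function.update_self] at hk
      have h2 : A.mulVec y + (-c) • v = A.mulVec (Function.update y e (-c)) :=
        eq_sub_iff_add_eq.mp hk
      have hker : A.mulVec (Function.update y e (-c)) = 0 := by
        rw [← h2, ← hc, neg_smul, add_neg_cancel]
      refine ⟨Sum.inl ⟨Function.update y e (-c), hker, fun f => ?_⟩, Subtype.ext hyz⟩
      by_cases hf : f = e
      · rw [hf, Function.update_self]; exact neg_ne_zero.mpr hc0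
      · rw [Function.update_of_ne hf]; exact hyf f hf
  have hcard := Nat.card_congr (Equiv.ofBijective φ ⟨hinj, hsurj⟩)
  rw [Nat.card_sum] at hcard
  push_cast [← hcard]
  ring
end

section
/- Let M be a matrix over F_q with columns indexed by E, and suppose e is a zero column (a loop). Then the number of full-support kernel vectors satisfies g_M(q) = (q-1) \cdot g_{M-e}(q). -/
lemma mulVec_update_zero_col {q : ℕ} {m E : Type*} [Fintype m] [Fintype E] [DecidableEq E]
    (A : Matrix m E (ZMod q)) (e : E) (hA : ∀ i, A i e = 0)
    (y : E → ZMod q) (c : ZMod q) :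
    A.mulVec (Function.update y e c) = A.mulVec y := by
  funext i
  simp only [Matrix.mulVec, dotProduct]
  apply Finset.sum_congr rfl
  intro f _
  by_cases hf : f = e
  · subst hf; simp [hA i]
  · simp [Function.update_of_ne hf]

/-- If `e` is a loop of `M` (a zero column), then the number of full-support kernel
vectors satisfies `g_M(q) = (q-1) * g_{M-e}(q)`, where the deletion `M - e` removes the
column `e` (its full-support kernel vectors being encoded as vectors `y` with `y e = 0`,
all other coordinates nonzero, and `M y = 0`). -/
theorem loop_full_support_kernel {q : ℕ} [Fact (Nat.Prime q)]
    {m E : Type*} [Fintype m] [Fintype E] [DecidableEq E]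
    (A : Matrix m E (ZMod q)) (e : E)
    (h_loop : A.transpose e = 0) :
    Nat.card {y : E → ZMod q // A.mulVec y = 0 ∧ ∀ f, y f ≠ 0} =
      (q - 1) *
        Nat.card {y : E → ZMod q // y e = 0 ∧ A.mulVec y = 0 ∧
          ∀ f, f ≠ e → y f ≠ 0} := by
  have hA : ∀ i, A i e = 0 := fun i => congrFun h_loop i
  have hq : (q - 1) = Nat.card (ZMod q)ˣ := by
    simp [Nat.card_eq_fintype_card, ZMod.card_units_eq_totient,
      Nat.totient_prime (Fact.out : Nat.Prime q)]
  rw [hq, ← Nat.card_prod]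
  apply Nat.card_congr
  refine ⟨fun y => (Units.mk0 (y.1 e) (y.2.2 e), ⟨Function.update y.1 e 0, ?_, ?_, ?_⟩),
    fun p => ⟨Function.update p.2.1 e (p.1 : ZMod q), ?_, ?_⟩, ?_, ?_⟩
  · simp
  · rw [mulVec_update_zero_col A e hA]; exact y.2.1
  · intro f hf
    rw [Function.update_of_ne hf]
    exact y.2.2 f
  · rw [mulVec_update_zero_col A e hA]; exact p.2.2.2.1
  · intro f
    by_cases hf : f = e
    · subst hf; simp
    · rw [Function.update_of_ne hf]; exact p.2.2.2.2 f hf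
  · intro y
    ext f
    by_cases hf : f = e
    · subst hf; simp
    · simp [Function.update_of_ne hf]
  · rintro ⟨u, z, hz, hmul, hne⟩
    simp only [Prod.mk.injEq]
    constructor
    · ext; simp
    · ext f
      by_cases hf : f = e
      · subst hf; simp [hz]
      · simp [Function.update_of_ne hf]
end

section
/- Let \Delta be a triangulation of a closed (compact, without boundary), connected, Z-orientable d-manifold. Then for every integer q \geq 2, the number of nowhere-zero Z_q-flows on \Delta is exactly q - 1. -/
/-- The entry of the top simplicial boundary matrix in row (ridge) `R` and column
(facet) `S`: if `R ⊆ S` and `S` has exactly one vertex `v` outside `R`, the entry is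
`(-1)^j` where `j` is the number of vertices of `S` preceding `v`; otherwise `0`. -/
def bdryEntry {V : Type*} [LinearOrder V] (S R : Finset V) : ℤ :=
  if R ⊆ S ∧ (S \ R).card = 1 then
    (-1) ^ (S.filter (fun w => ∀ u ∈ S \ R, w < u)).card
  else 0

lemma bdryEntry_eq_zero {V : Type*} [LinearOrder V] {S R : Finset V}
    (h : ¬ (R ⊆ S ∧ (S \ R).card = 1)) : bdryEntry S R = 0 := if_neg h

lemma bdryEntry_pm {V : Type*} [LinearOrder V] {S R : Finset V}
    (h : R ⊆ S ∧ (S \ R).card = 1) : bdryEntry S R = 1 ∨ bdryEntry S R = -1 := by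
  rw [bdryEntry, if_pos h]
  rcases Nat.even_or_odd ((S.filter (fun w => ∀ u ∈ S \ R, w < u)).card) with he | ho
  · exact Or.inl he.neg_one_pow
  · exact Or.inr ho.neg_one_pow

/-- At a ridge shared by two distinct facets, the flow condition reduces to a two-term
equation. -/
lemma flow_two_term {V : Type*} [LinearOrder V] {d q : ℕ}
    {facets : Finset (Finset V)}
    (htwo : ∀ R : Finset V, R.card = d → (∃ S ∈ facets, R ⊆ S) →
      (facets.filter (fun T => R ⊆ T)).card = 2)
    (x : {S // S ∈ facets} → ZMod q)
    (hx : ∀ R : Finset V, ∑ S : {S // S ∈ facets}, (bdryEntry S.1 R : ZMod q) * x S = 0)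
    (A B : {S // S ∈ facets}) (hAB : A ≠ B) (hd : (A.1 ∩ B.1).card = d) :
    (bdryEntry A.1 (A.1 ∩ B.1) : ZMod q) * x A
      + (bdryEntry B.1 (A.1 ∩ B.1) : ZMod q) * x B = 0 := by
  set R := A.1 ∩ B.1 with hRdef
  have hRA : R ⊆ A.1 := Finset.inter_subset_left
  have hRB : R ⊆ B.1 := Finset.inter_subset_right
  have hval : A.1 ≠ B.1 := fun h => hAB (Subtype.ext h)
  have hfilter : facets.filter (fun T => R ⊆ T) = {A.1, B.1} := by
    refine (Finset.eq_of_subset_of_card_le ?_ ?_).symm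
    · intro T hT
      rcases Finset.mem_insert.mp hT with h | h
      · subst h; exact Finset.mem_filter.mpr ⟨A.2, hRA⟩
      · rw [Finset.mem_singleton.mp h]; exact Finset.mem_filter.mpr ⟨B.2, hRB⟩
    · rw [htwo R hd ⟨A.1, A.2, hRA⟩,
        Finset.card_insert_of_notMem (by simpa using hval), Finset.card_singleton]
  have key := hx R
  have hsum : ∑ S : {S // S ∈ facets}, (bdryEntry S.1 R : ZMod q) * x S
      = ∑ S ∈ facets.attach.filter (fun S => R ⊆ S.1),
          (bdryEntry S.1 R : ZMod q) * x S := by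
    refine (Finset.sum_filter_of_ne ?_).symm
    intro S _ hS
    by_contra hsub
    apply hS
    rw [bdryEntry_eq_zero (fun h => hsub h.1)]
    simp
  have hset : facets.attach.filter (fun S => R ⊆ S.1) = {A, B} := by
    refine (Finset.eq_of_subset_of_card_le ?_ ?_).symm
    · intro T hT
      rcases Finset.mem_insert.mp hT with h | h
      · subst h; exact Finset.mem_filter.mpr ⟨Finset.mem_attach _ _, hRA⟩
      · rw [Finset.mem_singleton.mp h]
        exact Finset.mem_filter.mpr ⟨Finset.mem_attach _ _, hRB⟩
    · have hc : (facets.attach.filter (fun S => R ⊆ S.1)).card = 2 := by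
        rw [Finset.filter_attach, Finset.card_map, Finset.card_attach,
          htwo R hd ⟨A.1, A.2, hRA⟩]
      rw [hc, Finset.card_insert_of_notMem (by simpa using hAB), Finset.card_singleton]
  rw [hsum, hset, Finset.sum_pair hAB] at key
  exact key

/-- A triangulation of a closed, connected, `ℤ`-orientable `d`-manifold has exactly
`q - 1` nowhere-zero `Z_q`-flows.  The manifold being closed and connected is encoded by
every ridge lying in exactly two facets and the dual graph being connected;
`ℤ`-orientability by the existence of a fundamental class: an integer kernel vector of
the top boundary matrix all of whose coordinates are `±1`. -/
theorem closed_orientable_manifold_flow_count {V : Type*} [LinearOrder V]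
    (d q : ℕ) (hq : 2 ≤ q)
    (facets : Finset (Finset V)) (hpure : ∀ S ∈ facets, S.card = d + 1)
    (hne : facets.Nonempty)
    (htwo : ∀ R : Finset V, R.card = d → (∃ S ∈ facets, R ⊆ S) →
      (facets.filter (fun T => R ⊆ T)).card = 2)
    (hconn : ∀ S T : {S // S ∈ facets},
      Relation.ReflTransGen
        (fun A B : {S // S ∈ facets} => A ≠ B ∧ (A.1 ∩ B.1).card = d) S T)
    (horient : ∃ ε : {S // S ∈ facets} → ℤ, (∀ S, ε S = 1 ∨ ε S = -1) ∧
      ∀ R : Finset V, ∑ S : {S // S ∈ facets}, bdryEntry S.1 R * ε S = 0) :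
    Nat.card {x : {S // S ∈ facets} → ZMod q //
        (∀ R : Finset V,
          ∑ S : {S // S ∈ facets}, (bdryEntry S.1 R : ZMod q) * x S = 0) ∧
        ∀ S, x S ≠ 0} = q - 1 := by
  haveI : NeZero q := ⟨by omega⟩
  obtain ⟨ε, hε1, hεker⟩ := horient
  obtain ⟨S₀v, hS₀⟩ := hne
  set S₀ : {S // S ∈ facets} := ⟨S₀v, hS₀⟩ with hS₀def
  set εq : {S // S ∈ facets} → ZMod q := fun S => ((ε S : ℤ) : ZMod q) with hεqdef
  have hεsq : ∀ S, εq S * εq S = 1 := by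
    intro S; rcases hε1 S with h | h <;> simp [hεqdef, h]
  have hεflow : ∀ R : Finset V,
      ∑ S : {S // S ∈ facets}, (bdryEntry S.1 R : ZMod q) * εq S = 0 := by
    intro R
    have h1 : ((∑ S : {S // S ∈ facets}, bdryEntry S.1 R * ε S : ℤ) : ZMod q) = 0 := by
      rw [hεker R]; simp
    push_cast at h1
    exact h1
  -- squared entries are 1
  have hentsq : ∀ (A B : {S // S ∈ facets}), (A.1 ∩ B.1).card = d →
      (bdryEntry A.1 (A.1 ∩ B.1) : ZMod q) * (bdryEntry A.1 (A.1 ∩ B.1) : ZMod q) = 1 := by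
    intro A B hd
    have hRA : A.1 ∩ B.1 ⊆ A.1 := Finset.inter_subset_left
    have hcond : (A.1 ∩ B.1) ⊆ A.1 ∧ (A.1 \ (A.1 ∩ B.1)).card = 1 := by
      refine ⟨hRA, ?_⟩
      rw [Finset.card_sdiff_of_subset hRA, hd, hpure A.1 A.2]
      omega
    rcases bdryEntry_pm hcond with h | h <;> rw [h] <;> push_cast <;> ring
  -- constancy of x * εq along the dual graph
  have hconst : ∀ x : {S // S ∈ facets} → ZMod q,
      (∀ R : Finset V, ∑ S : {S // S ∈ facets}, (bdryEntry S.1 R : ZMod q) * x S = 0) →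
      ∀ S T, x S * εq S = x T * εq T := by
    intro x hx S T
    have h := hconn S T
    induction h with
    | refl => rfl
    | tail _ h2 ih =>
      rename_i B C _
      obtain ⟨hBC, hd⟩ := h2
      refine ih.trans ?_
      have h1 := flow_two_term htwo x hx B C hBC hd
      have h2' := flow_two_term htwo εq hεflow B C hBC hd
      have ha := hentsq B C hd
      have hb : (bdryEntry C.1 (B.1 ∩ C.1) : ZMod q) *
          (bdryEntry C.1 (B.1 ∩ C.1) : ZMod q) = 1 := by
        have := hentsq C B (by rwa [Finset.inter_comm])
        rwa [Finset.inter_comm] at this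
      set a : ZMod q := (bdryEntry B.1 (B.1 ∩ C.1) : ZMod q)
      set b : ZMod q := (bdryEntry C.1 (B.1 ∩ C.1) : ZMod q)
      linear_combination (εq B * a) * h1 - (x C * b) * h2' - (x B * εq B) * ha
        + (x C * εq C) * hb
  -- the bijection with nonzero scalars
  let f : {c : ZMod q // c ≠ 0} → {x : {S // S ∈ facets} → ZMod q //
        (∀ R : Finset V,
          ∑ S : {S // S ∈ facets}, (bdryEntry S.1 R : ZMod q) * x S = 0) ∧
        ∀ S, x S ≠ 0} := fun c =>
    ⟨fun S => c.1 * εq S, by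
      constructor
      · intro R
        have : ∑ S : {S // S ∈ facets}, (bdryEntry S.1 R : ZMod q) * (c.1 * εq S)
            = c.1 * ∑ S : {S // S ∈ facets}, (bdryEntry S.1 R : ZMod q) * εq S := by
          rw [Finset.mul_sum]
          exact Finset.sum_congr rfl (fun S _ => by ring)
        rw [this, hεflow R, mul_zero]
      · intro S hS0
        apply c.2
        have := congrArg (· * εq S) hS0
        simp only [zero_mul, mul_assoc, hεsq S, mul_one] at this
        exact this⟩
  have hfbij : Function.Bijective f := by
    constructor
    · intro c c' h
      have h0 : c.1 * εq S₀ = c'.1 * εq S₀ := congrFun (congrArg Subtype.val h) S₀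
      have := congrArg (· * εq S₀) h0
      simp only [mul_assoc, hεsq S₀, mul_one] at this
      exact Subtype.ext this
    · rintro ⟨x, hxf, hxnz⟩
      have hc0 : x S₀ * εq S₀ ≠ 0 := by
        intro h
        apply hxnz S₀
        have := congrArg (· * εq S₀) h
        simp only [zero_mul, mul_assoc, hεsq S₀, mul_one] at this
        exact this
      refine ⟨⟨x S₀ * εq S₀, hc0⟩, ?_⟩
      apply Subtype.ext
      funext S
      show x S₀ * εq S₀ * εq S = x S
      rw [← hconst x hxf S S₀, mul_assoc, hεsq S, mul_one]
  rw [← Nat.card_congr (Equiv.ofBijective f hfbij)]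
  rw [Nat.card_eq_fintype_card]
  have : Fintype.card {c : ZMod q // c ≠ 0}
      = Fintype.card (ZMod q) - Fintype.card {c : ZMod q // c = 0} :=
    Fintype.card_subtype_compl _
  rw [this, ZMod.card, Fintype.card_subtype_eq]
end

section
/- Let \Delta be a pure simplicial complex with top boundary matrix \partial\Delta (an integer matrix). Then the function \phi_\Delta(q) counting nowhere-zero Z_q-flows on \Delta is a quasipolynomial in the positive integer q; i.e., there exist a positive integer k and polynomials p_0, ..., p_{k-1} such that \phi_\Delta(q) = p_j(q) whenever q \equiv j mod k. -/
lemma card_torsion (n q : ℕ) (hq : 0 < q) :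
    Nat.card {x : ZMod q // (n : ZMod q) * x = 0} = Nat.gcd q n := by
  haveI : NeZero q := ⟨hq.ne'⟩
  set φ : ZMod q →+ ZMod q := AddMonoidHom.mulLeft (n : ZMod q) with hφ
  have hker : Nat.card {x : ZMod q // (n : ZMod q) * x = 0} = Nat.card φ.ker := by
    simp only [hφ]
    congr 1
  have hrange : φ.range = AddSubgroup.zmultiples ((n : ℕ) : ZMod q) := by
    ext x
    simp only [AddMonoidHom.mem_range, AddSubgroup.mem_zmultiples_iff]
    constructor
    · rintro ⟨y, rfl⟩
      obtain ⟨k, rfl⟩ := ZMod.intCast_surjective y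
      exact ⟨k, by simp [hφ, zsmul_eq_mul, mul_comm]⟩
    · rintro ⟨k, rfl⟩
      exact ⟨(k : ZMod q), by simp [hφ, zsmul_eq_mul, mul_comm]⟩
  have h1 := AddSubgroup.card_eq_card_quotient_mul_card_addSubgroup (s := φ.ker)
  have h2 : Nat.card (ZMod q ⧸ φ.ker) = Nat.card φ.range :=
    Nat.card_congr (QuotientAddGroup.quotientKerEquivRange φ).toEquiv
  have h3 : Nat.card φ.range = q / Nat.gcd q n := by
    rw [hrange, Nat.card_zmultiples, ZMod.addOrderOf_coe _ hq.ne']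
  have hdvd : Nat.gcd q n ∣ q := Nat.gcd_dvd_left q n
  have hgpos : 0 < Nat.gcd q n := Nat.gcd_pos_of_pos_left n hq
  have hqpos : 0 < q / Nat.gcd q n := Nat.div_pos (Nat.le_of_dvd hq hdvd) hgpos
  have hcardq : Nat.card (ZMod q) = q := by simp [Nat.card_eq_fintype_card, ZMod.card]
  rw [hcardq, h2, h3] at h1
  rw [hker]
  have : Nat.card φ.ker = q / (q / Nat.gcd q n) :=
    Nat.eq_div_of_mul_eq_right hqpos.ne' (by linarith [h1])
  rw [this, Nat.div_div_self hdvd hq.ne']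

lemma card_hom_zmod (n q : ℕ) (hq : 0 < q) :
    Nat.card (ZMod n →+ ZMod q) = Nat.gcd q n := by
  rw [← card_torsion n q hq]
  have h : ∀ x : ZMod q, ((n : ZMod q) * x = 0) ↔ (zmultiplesHom (ZMod q) x) ((n : ℕ) : ℤ) = 0 := by
    intro x
    rw [zmultiplesHom_apply, zsmul_eq_mul, Int.cast_natCast]
  have e2 : {x : ZMod q // (n : ZMod q) * x = 0} ≃ {f : ℤ →+ ZMod q // f ((n:ℕ):ℤ) = 0} :=
    Equiv.subtypeEquiv (zmultiplesHom (ZMod q)) h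
  exact Nat.card_congr ((e2.trans (ZMod.lift n)).symm)

/-- Homs out of a product. -/
def prodHomEquiv (M N P : Type*) [AddCommMonoid M] [AddCommMonoid N] [AddCommMonoid P] :
    (M × N →+ P) ≃ (M →+ P) × (N →+ P) where
  toFun f := (f.comp (AddMonoidHom.inl M N), f.comp (AddMonoidHom.inr M N))
  invFun g := g.1.coprod g.2
  left_inv f := by
    ext ⟨a, b⟩
    simp [AddMonoidHom.coprod_apply, ← map_add]
  right_inv g := by
    ext <;> simp

/-- Homs out of a direct sum. -/
def directSumHomEquiv (ι : Type*) [DecidableEq ι] (β : ι → Type*) [∀ i, AddCommMonoid (β i)]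
    (P : Type*) [AddCommMonoid P] :
    (DirectSum ι β →+ P) ≃ (∀ i, β i →+ P) where
  toFun f i := f.comp (DirectSum.of β i)
  invFun g := DirectSum.toAddMonoid g
  left_inv f := by
    refine DirectSum.addHom_ext fun i x => ?_
    simp [DirectSum.toAddMonoid_of]
  right_inv g := by
    funext i
    ext x
    simp [DirectSum.toAddMonoid_of]

lemma card_hom_congr {C D A : Type*} [AddCommGroup C] [AddCommGroup D] [AddCommGroup A]
    (e : C ≃+ D) : Nat.card (C →+ A) = Nat.card (D →+ A) := by
  apply Nat.card_congr
  exact { toFun := fun f => f.comp e.symm.toAddMonoidHom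
          invFun := fun f => f.comp e.toAddMonoidHom
          left_inv := fun f => by ext x; simp
          right_inv := fun f => by ext x; simp }

lemma card_hom_fg (C : Type*) [AddCommGroup C] [hFG : AddGroup.FG C] :
    ∃ k : ℕ, 0 < k ∧ ∃ e : ℕ, ∃ c : ℕ → ℕ,
      ∀ q m : ℕ, 0 < q → k ∣ m → Nat.card (C →+ ZMod q) = c (q % m) * q ^ e := by
  obtain ⟨f, ι, fι, p, hp, eexp, ⟨φ⟩⟩ := AddCommGroup.equiv_free_prod_directSum_zmod C
  haveI := fι
  classical
  set n : ι → ℕ := fun i => p i ^ eexp i with hn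
  refine ⟨∏ i, n i, Finset.prod_pos (fun i _ => pow_pos (hp i).pos _), f,
    fun j => ∏ i, Nat.gcd j (n i), ?_⟩
  intro q m hq hkm
  have hg : ∀ i : ι, Nat.gcd q (n i) = Nat.gcd (q % m) (n i) := by
    intro i
    have hnm : n i ∣ m := dvd_trans (Finset.dvd_prod_of_mem _ (Finset.mem_univ i)) hkm
    calc Nat.gcd q (n i) = Nat.gcd (n i) q := Nat.gcd_comm _ _
      _ = Nat.gcd (q % n i) (n i) := Nat.gcd_rec _ _
      _ = Nat.gcd ((q % m) % n i) (n i) := by rw [Nat.mod_mod_of_dvd q hnm]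
      _ = Nat.gcd (n i) (q % m) := (Nat.gcd_rec _ _).symm
      _ = Nat.gcd (q % m) (n i) := Nat.gcd_comm _ _
  have h1 : Nat.card ((Fin f →₀ ℤ) →+ ZMod q) = q ^ f := by
    rw [Nat.card_congr Finsupp.liftAddHom.symm.toEquiv,
      Nat.card_congr (Equiv.piCongrRight (fun _ : Fin f => (zmultiplesHom (ZMod q)).symm)),
      Nat.card_pi]
    haveI : NeZero q := ⟨hq.ne'⟩
    simp [Nat.card_eq_fintype_card, ZMod.card]
  have h2 : Nat.card ((DirectSum ι fun i => ZMod (n i)) →+ ZMod q)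
      = ∏ i, Nat.gcd (q % m) (n i) := by
    rw [Nat.card_congr (directSumHomEquiv ι _ _), Nat.card_pi]
    exact Finset.prod_congr rfl fun i _ => by rw [card_hom_zmod _ _ hq, hg i]
  rw [card_hom_congr φ, Nat.card_congr (prodHomEquiv _ _ _), Nat.card_prod, h1, h2, mul_comm]

/-- Linear maps from a quotient correspond to linear maps vanishing on the submodule. -/
def quotHomEquiv {R M A : Type*} [CommRing R] [AddCommGroup M] [Module R M]
    [AddCommGroup A] [Module R A] (N : Submodule R M) :
    ((M ⧸ N) →ₗ[R] A) ≃ {f : M →ₗ[R] A // N ≤ LinearMap.ker f} where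
  toFun g := ⟨g.comp N.mkQ, fun x hx => by
    simp [LinearMap.mem_ker, Submodule.mkQ_apply, (Submodule.Quotient.mk_eq_zero N).2 hx]⟩
  invFun f := N.liftQ f.1 f.2
  left_inv g := by
    refine Submodule.linearMap_qext N ?_
    rw [Submodule.liftQ_mkQ]
  right_inv f := by
    ext x
    simp

lemma card_solutions {ι : Type*} [Fintype ι] (G : Set (ι → ℤ)) (q : ℕ) :
    Nat.card {y : ι → ZMod q // ∀ v ∈ G, ∑ i, v i • y i = 0}
      = Nat.card ((((ι → ℤ) ⧸ Submodule.span ℤ G)) →+ ZMod q) := by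
  apply Nat.card_congr
  symm
  refine ((addMonoidHomLequivInt (A := ((ι → ℤ) ⧸ Submodule.span ℤ G)) (B := ZMod q) ℤ).toEquiv.trans
    ((quotHomEquiv (Submodule.span ℤ G)).trans ?_))
  refine Equiv.subtypeEquiv (Module.piEquiv ι ℤ (ZMod q)).symm.toEquiv ?_
  intro f
  rw [Submodule.span_le]
  have key : ∀ v : ι → ℤ, ∑ i, v i • ((Module.piEquiv ι ℤ (ZMod q)).symm.toEquiv f) i = f v := by
    intro v
    rw [LinearEquiv.coe_toEquiv, ← Module.piEquiv_apply_apply, LinearEquiv.apply_symm_apply]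
  constructor
  · intro h v hv
    rw [key]
    exact LinearMap.mem_ker.1 (h hv)
  · intro h v hv
    rw [SetLike.mem_coe, LinearMap.mem_ker, ← key]
    exact h v hv

open Finset

lemma inclusion_exclusion {β ι : Type*} [Fintype β] [Fintype ι] (P : β → Prop) (z : ι → β → Prop) :
    (Nat.card {y : β // (∀ i, ¬ z i y) ∧ P y} : ℤ)
      = ∑ T ∈ (Finset.univ : Finset ι).powerset, (-1 : ℤ) ^ T.card *
          (Nat.card {y : β // (∀ i ∈ T, z i y) ∧ P y} : ℤ) := by
  classical
  have hc : ∀ p : β → Prop, Nat.card {y // p y} = (Finset.univ.filter p).card := by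
    intro p
    rw [Nat.card_eq_fintype_card, Fintype.card_subtype]
  have hsplit : ∀ A : β → Prop, ((Nat.card {y : β // A y ∧ P y}) : ℤ)
      = ∑ y ∈ Finset.univ.filter P, (if A y then (1 : ℤ) else 0) := by
    intro A
    rw [hc, Finset.card_filter]
    push_cast
    rw [Finset.sum_filter]
    apply Finset.sum_congr rfl
    intro x _
    by_cases hA : A x <;> by_cases hP : P x <;> simp [hA, hP]
  rw [hsplit (fun y => ∀ i, ¬ z i y)]
  simp_rw [hsplit, Finset.mul_sum]
  rw [Finset.sum_comm]
  apply Finset.sum_congr rfl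
  intro y _
  set Zy : Finset ι := Finset.univ.filter (fun i => z i y) with hZy
  have h0 : (∀ i, ¬ z i y) ↔ Zy = ∅ := by
    simp [hZy, Finset.filter_eq_empty_iff]
  have h1 : ∀ T : Finset ι, (∀ i ∈ T, z i y) ↔ T ⊆ Zy := by
    intro T
    constructor
    · intro h i hi
      simp [hZy, h i hi]
    · intro h i hi
      simpa [hZy] using h hi
  simp_rw [h0, h1]
  rw [← Finset.sum_powerset_neg_one_pow_card]
  have hps : Finset.univ.powerset.filter (· ⊆ Zy) = Zy.powerset := by
    ext T
    simp
  rw [← hps, Finset.sum_filter]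
  apply Finset.sum_congr rfl
  intro T _
  by_cases h : T ⊆ Zy <;> simp [h]

noncomputable def modq_equiv {ι ρ : Type*} [Fintype ι] (A : ρ → ι → ℤ) (q : ℕ) (hq : 0 < q) :
    {x : ι → ℤ // (∀ i, 0 < x i ∧ x i < q) ∧ ∀ r : ρ, (q : ℤ) ∣ ∑ i, A r i * x i}
      ≃ {y : ι → ZMod q // (∀ i, ¬ y i = 0) ∧ ∀ r : ρ, ∑ i, A r i • y i = 0} := by
  haveI : NeZero q := ⟨hq.ne'⟩
  have castsum : ∀ (x : ι → ℤ) (r : ρ),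
      ((∑ i, A r i * x i : ℤ) : ZMod q) = ∑ i, A r i • ((x i : ℤ) : ZMod q) := by
    intro x r
    rw [Int.cast_sum]
    apply Finset.sum_congr rfl
    intro i _
    rw [zsmul_eq_mul]
    push_cast
    ring
  refine
    { toFun := fun x => ⟨fun i => ((x.1 i : ℤ) : ZMod q), ?_, ?_⟩
      invFun := fun y => ⟨fun i => ((y.1 i).val : ℤ), ?_, ?_⟩
      left_inv := ?_
      right_inv := ?_ }
  · intro i
    rw [ZMod.intCast_zmod_eq_zero_iff_dvd]
    intro hdvd
    have h1 := (x.2.1 i).1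
    have h2 := (x.2.1 i).2
    have := Int.le_of_dvd h1 hdvd
    omega
  · intro r
    rw [← castsum]
    rw [ZMod.intCast_zmod_eq_zero_iff_dvd]
    exact x.2.2 r
  · intro i
    have h1 : (y.1 i).val < q := ZMod.val_lt _
    have h2 : (y.1 i).val ≠ 0 := fun h => (y.2.1 i) ((ZMod.val_eq_zero _).1 h)
    show (0:ℤ) < ((y.1 i).val : ℤ) ∧ ((y.1 i).val : ℤ) < (q:ℤ)
    refine ⟨?_, ?_⟩
    · exact_mod_cast Nat.pos_of_ne_zero h2
    · exact_mod_cast h1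
  · intro r
    rw [← ZMod.intCast_zmod_eq_zero_iff_dvd, castsum]
    have : ∀ i, (((((y.1 i).val : ℤ)) : ZMod q)) = y.1 i := by
      intro i
      push_cast
      exact ZMod.natCast_rightInverse _
    simp_rw [this]
    exact y.2.2 r
  · rintro ⟨x, hx⟩
    apply Subtype.ext
    funext i
    show ((((x i : ℤ) : ZMod q)).val : ℤ) = x i
    rw [ZMod.val_intCast]
    exact Int.emod_eq_of_lt (le_of_lt (hx.1 i).1) (by exact_mod_cast (hx.1 i).2)
  · rintro ⟨y, hy⟩
    apply Subtype.ext
    funext i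
    show ((((y i).val : ℤ)) : ZMod q) = y i
    push_cast
    exact ZMod.natCast_rightInverse _

/-- The function `φ_Δ(q)` counting nowhere-zero `Z_q`-flows on a pure simplicial
complex `Δ` (i.e. integer vectors `x` with `0 < x_S < q` on every facet whose boundary
vanishes mod `q`) is a quasipolynomial in `q`: there are a period `k > 0` and
constituent polynomials `p_0, …, p_{k-1}` with `φ_Δ(q) = p_{q mod k}(q)`. -/
theorem flow_counting_function_is_quasipolynomial {V : Type*} [LinearOrder V]
    (d : ℕ) (facets : Finset (Finset V)) (hpure : ∀ S ∈ facets, S.card = d + 1) :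
    ∃ k : ℕ, 0 < k ∧ ∃ p : ℕ → Polynomial ℚ, ∀ q : ℕ, 1 ≤ q →
      (Nat.card {x : {S // S ∈ facets} → ℤ //
          (∀ S, 0 < x S ∧ x S < q) ∧
          ∀ R : Finset V, (q : ℤ) ∣
            ∑ S : {S // S ∈ facets}, bdryEntry S.1 R * x S} : ℚ) =
        (p (q % k)).eval (q : ℚ) := by
  classical
  set ι := {S // S ∈ facets} with hι
  set A : Finset V → ι → ℤ := fun R S => bdryEntry S.1 R with hA
  set Gset : Finset ι → Set (ι → ℤ) := fun T =>
    Set.range A ∪ ((fun i => Pi.single i (1:ℤ)) '' (T : Set ι)) with hGset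
  set N : Finset ι → Submodule ℤ (ι → ℤ) := fun T => Submodule.span ℤ (Gset T) with hN
  have hdata : ∀ T : Finset ι, ∃ k, 0 < k ∧ ∃ e : ℕ, ∃ c : ℕ → ℕ, ∀ q m, 0 < q → k ∣ m →
      Nat.card (((ι → ℤ) ⧸ N T) →+ ZMod q) = c (q % m) * q ^ e := by
    intro T
    haveI : AddGroup.FG ((ι → ℤ) ⧸ N T) :=
      (Module.Finite.iff_addGroup_fg (G := (ι → ℤ) ⧸ N T)).mp inferInstance
    exact card_hom_fg _
  choose k hk e c hc using hdata
  refine ⟨∏ T ∈ (Finset.univ : Finset ι).powerset, k T,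
    Finset.prod_pos (fun T _ => hk T),
    fun j => ∑ T ∈ (Finset.univ : Finset ι).powerset,
      Polynomial.C ((-1:ℚ)^T.card * (c T j : ℚ)) * Polynomial.X ^ (e T), ?_⟩
  set K := ∏ T ∈ (Finset.univ : Finset ι).powerset, k T with hK
  intro q hq
  have hq0 : 0 < q := hq
  haveI : NeZero q := ⟨hq0.ne'⟩
  -- Step 1 : reduce to ZMod q
  have h1 : Nat.card {x : ι → ℤ //
        (∀ S, 0 < x S ∧ x S < q) ∧
        ∀ R : Finset V, (q : ℤ) ∣ ∑ S : ι, bdryEntry S.1 R * x S}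
      = Nat.card {y : ι → ZMod q //
        (∀ i, ¬ y i = 0) ∧ ∀ r : Finset V, ∑ i, A r i • y i = 0} :=
    Nat.card_congr (modq_equiv A q hq0)
  -- Step 3 : count for each subset T
  have h3 : ∀ T : Finset ι,
      Nat.card {y : ι → ZMod q //
        (∀ i ∈ T, y i = 0) ∧ ∀ r : Finset V, ∑ i, A r i • y i = 0}
      = c T (q % K) * q ^ e T := by
    intro T
    have heq : ∀ y : ι → ZMod q,
        ((∀ i ∈ T, y i = 0) ∧ ∀ r : Finset V, ∑ i, A r i • y i = 0)
          ↔ (∀ v ∈ Gset T, ∑ i, v i • y i = 0) := by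
      intro y
      have hsing : ∀ i : ι, ∑ j, (Pi.single i (1:ℤ) : ι → ℤ) j • y j = y i := by
        intro i
        simp [Pi.single_apply, ite_smul, Finset.sum_ite_eq']
        rw [Fintype.sum_eq_single i (fun j hj => if_neg hj), if_pos rfl]
      constructor
      · rintro ⟨hT, hR⟩ v hv
        rcases hv with ⟨r, rfl⟩ | ⟨i, hi, rfl⟩
        · exact hR r
        · rw [hsing i]
          exact hT i hi
      · intro h
        constructor
        · intro i hi
          have := h (Pi.single i (1:ℤ)) (Or.inr ⟨i, hi, rfl⟩)
          rwa [hsing i] at this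
        · intro r
          exact h (A r) (Or.inl ⟨r, rfl⟩)
    rw [Nat.card_congr (Equiv.subtypeEquivRight heq), card_solutions (Gset T) q,
      hc T q K hq0 (Finset.dvd_prod_of_mem _ (Finset.mem_powerset.2 (Finset.subset_univ T)))]
  -- Step 2 : inclusion exclusion
  have h2 := inclusion_exclusion (β := ι → ZMod q) (ι := ι)
    (fun y => ∀ r : Finset V, ∑ i, A r i • y i = 0) (fun i y => y i = 0)
  simp_rw [h3] at h2
  rw [h1]
  have hQ := congrArg (fun z : ℤ => (z : ℚ)) h2
  push_cast at hQ
  rw [hQ, Polynomial.eval_finset_sum]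
  apply Finset.sum_congr rfl
  intro T _
  push_cast
  simp
  ring
end

section
/- Let \Delta be a simplicial triangulation of the Klein bottle. Then the number of nowhere-zero Z_q-flows on \Delta is 0 if q is odd and 1 if q is even; in particular \phi_\Delta(q) is a quasipolynomial of period exactly 2 and is not a polynomial in q. -/
lemma bdryEntry_cases {V : Type*} [LinearOrder V] (S R : Finset V) :
    bdryEntry S R = 0 ∨ bdryEntry S R = 1 ∨ bdryEntry S R = -1 := by
  unfold bdryEntry
  split
  · rcases Nat.even_or_odd ((S.filter (fun w => ∀ u ∈ S \ R, w < u)).card) with h | h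
    · exact Or.inr (Or.inl h.neg_one_pow)
    · exact Or.inr (Or.inr h.neg_one_pow)
  · exact Or.inl rfl

lemma bdryEntry_ne_zero {V : Type*} [LinearOrder V] {S R : Finset V}
    (h1 : R ⊆ S) (h2 : (S \ R).card = 1) : bdryEntry S R ≠ 0 := by
  unfold bdryEntry
  rw [if_pos ⟨h1, h2⟩]
  exact pow_ne_zero _ (by norm_num)

lemma bdryEntry_of_ne_zero {V : Type*} [LinearOrder V] {S R : Finset V}
    (h : bdryEntry S R ≠ 0) : R ⊆ S ∧ (S \ R).card = 1 := by
  by_contra hc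
  exact h (by unfold bdryEntry; rw [if_neg hc])

-- the unique torsion-point count in ZMod q
lemma zmod_two_torsion_count (q : ℕ) (hq : 1 ≤ q) :
    Nat.card {a : ZMod q // a + a = 0 ∧ a ≠ 0} = if q % 2 = 1 then 0 else 1 := by
  haveI : NeZero q := ⟨by omega⟩
  have hval : ∀ a : ZMod q, (a + a = 0 ∧ a ≠ 0) ↔ 2 * a.val = q := by
    intro a
    constructor
    · rintro ⟨h0, hne⟩
      have hv : ((a.val + a.val : ℕ) : ZMod q) = 0 := by
        push_cast
        rw [ZMod.natCast_zmod_val]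
        exact h0
      have hdvd : q ∣ a.val + a.val := (ZMod.natCast_eq_zero_iff _ _).mp hv
      have hlt : a.val < q := ZMod.val_lt a
      have hne' : a.val ≠ 0 := fun h => hne ((ZMod.val_eq_zero a).mp h)
      obtain ⟨k, hk⟩ := hdvd
      have hk1 : k = 1 := by
        rcases Nat.lt_or_ge k 1 with h | h
        · interval_cases k
          omega
        rcases Nat.lt_or_ge k 2 with h2 | h2
        · omega
        · have : q * 2 ≤ q * k := Nat.mul_le_mul_left q h2
          omega
      rw [hk1, mul_one] at hk
      omega
    · intro h
      have hvlt : a.val < q := ZMod.val_lt a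
      constructor
      · have : ((a.val + a.val : ℕ) : ZMod q) = 0 := by
          rw [show a.val + a.val = q by omega]
          exact ZMod.natCast_self q
        calc a + a = ((a.val + a.val : ℕ) : ZMod q) := by
              push_cast; rw [ZMod.natCast_zmod_val]
          _ = 0 := this
      · intro h0
        have : a.val = 0 := (ZMod.val_eq_zero a).mpr h0
        omega
  rcases Nat.even_or_odd q with he | ho
  · rw [if_neg (by have := Nat.even_iff.mp he; omega : ¬ q % 2 = 1)]
    rw [Nat.card_eq_one_iff_unique]
    obtain ⟨m, hm⟩ := he
    have hm1 : 1 ≤ m := by omega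
    have hmlt : m < q := by omega
    have hwit : 2 * ((m : ZMod q)).val = q := by
      rw [ZMod.val_cast_of_lt hmlt]; omega
    refine ⟨⟨fun ⟨a, ha⟩ ⟨b, hb⟩ => ?_⟩, ⟨⟨(m : ZMod q), (hval _).mpr hwit⟩⟩⟩
    have ha' := (hval a).mp ha
    have hb' := (hval b).mp hb
    have : a.val = b.val := by omega
    apply Subtype.ext
    show a = b
    rw [← ZMod.natCast_zmod_val a, ← ZMod.natCast_zmod_val b, this]
  · rw [if_pos (Nat.odd_iff.mp ho)]
    rw [Nat.card_eq_zero]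
    left
    refine ⟨fun ⟨a, ha⟩ => ?_⟩
    have h1 := (hval a).mp ha
    have h2 := Nat.odd_iff.mp ho
    omega

/-- For a simplicial triangulation `Δ` of the Klein bottle, the number of nowhere-zero
`Z_q`-flows is `0` for odd `q` and `1` for even `q`; in particular `φ_Δ` is a
quasipolynomial of period `2` and is not a polynomial in `q`.  Being a triangulation of
the Klein bottle is encoded combinatorially: `Δ` is a nonempty pure `2`-dimensional
complex, every ridge (edge) lies in exactly two facets, the dual graph is connected
(closed connected surface), and the top integral homology vanishes (non-orientability:
the integer kernel of the top boundary matrix is trivial). -/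
theorem klein_bottle_flow_count {V : Type*} [LinearOrder V]
    (facets : Finset (Finset V)) (hpure : ∀ S ∈ facets, S.card = 3)
    (hne : facets.Nonempty)
    (htwo : ∀ R : Finset V, R.card = 2 → (∃ S ∈ facets, R ⊆ S) →
      (facets.filter (fun T => R ⊆ T)).card = 2)
    (hconn : ∀ S T : {S // S ∈ facets},
      Relation.ReflTransGen
        (fun A B : {S // S ∈ facets} => A ≠ B ∧ (A.1 ∩ B.1).card = 2) S T)
    (hnonorient : ∀ ε : {S // S ∈ facets} → ℤ,
      (∀ R : Finset V, ∑ S : {S // S ∈ facets}, bdryEntry S.1 R * ε S = 0) → ε = 0) :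
    (∀ q : ℕ, 1 ≤ q →
      Nat.card {x : {S // S ∈ facets} → ZMod q //
          (∀ R : Finset V,
            ∑ S : {S // S ∈ facets}, (bdryEntry S.1 R : ZMod q) * x S = 0) ∧
          ∀ S, x S ≠ 0} = if q % 2 = 1 then 0 else 1) ∧
    ¬ ∃ P : Polynomial ℚ, ∀ q : ℕ, 1 ≤ q →
      (Nat.card {x : {S // S ∈ facets} → ZMod q //
          (∀ R : Finset V,
            ∑ S : {S // S ∈ facets}, (bdryEntry S.1 R : ZMod q) * x S = 0) ∧
          ∀ S, x S ≠ 0} : ℚ) = P.eval (q : ℚ) := by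
  classical
  set F := {S // S ∈ facets} with hF
  obtain ⟨s₀, hs₀⟩ := hne
  set S₀ : F := ⟨s₀, hs₀⟩ with hS₀
  -- the support of a ridge row: either empty or exactly two facets
  have pair : ∀ R : Finset V, (∀ S : F, bdryEntry S.1 R = 0) ∨
      ∃ A B : F, A ≠ B ∧ bdryEntry A.1 R ≠ 0 ∧ bdryEntry B.1 R ≠ 0 ∧
        ∀ S : F, S ≠ A → S ≠ B → bdryEntry S.1 R = 0 := by
    intro R
    by_cases h : ∀ S : F, bdryEntry S.1 R = 0
    · exact Or.inl h
    right
    push_neg at h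
    obtain ⟨S₁, hS₁⟩ := h
    obtain ⟨hsub, hcard⟩ := bdryEntry_of_ne_zero hS₁
    have h3 := hpure S₁.1 S₁.2
    have hle := Finset.card_le_card hsub
    have hsd := Finset.card_sdiff_of_subset hsub
    have hR2 : R.card = 2 := by omega
    have hfil := htwo R hR2 ⟨S₁.1, S₁.2, hsub⟩
    obtain ⟨a, b, hab, hfeq⟩ := Finset.card_eq_two.mp hfil
    have ha : a ∈ facets ∧ R ⊆ a := by
      have : a ∈ facets.filter (fun T => R ⊆ T) := by rw [hfeq]; simp
      simpa using this
    have hb : b ∈ facets ∧ R ⊆ b := by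
      have : b ∈ facets.filter (fun T => R ⊆ T) := by rw [hfeq]; simp
      simpa using this
    refine ⟨⟨a, ha.1⟩, ⟨b, hb.1⟩, fun h => hab (congrArg Subtype.val h), ?_, ?_, ?_⟩
    · exact bdryEntry_ne_zero ha.2 (by rw [Finset.card_sdiff_of_subset ha.2, hpure a ha.1, hR2])
    · exact bdryEntry_ne_zero hb.2 (by rw [Finset.card_sdiff_of_subset hb.2, hpure b hb.1, hR2])
    · intro S hSa hSb
      by_contra hS
      obtain ⟨hsub', _⟩ := bdryEntry_of_ne_zero hS
      have : S.1 ∈ facets.filter (fun T => R ⊆ T) := by simp [S.2, hsub']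
      rw [hfeq] at this
      simp only [Finset.mem_insert, Finset.mem_singleton] at this
      rcases this with h' | h'
      · exact hSa (Subtype.ext h')
      · exact hSb (Subtype.ext h')
  -- support of the row for a dual-graph edge is exactly the two facets
  have pairAB : ∀ A B : F, A ≠ B → (A.1 ∩ B.1).card = 2 →
      bdryEntry A.1 (A.1 ∩ B.1) ≠ 0 ∧ bdryEntry B.1 (A.1 ∩ B.1) ≠ 0 ∧
      ∀ S : F, S ≠ A → S ≠ B → bdryEntry S.1 (A.1 ∩ B.1) = 0 := by
    intro A B hAB hcap
    set R := A.1 ∩ B.1 with hR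
    have hsubA : R ⊆ A.1 := Finset.inter_subset_left
    have hsubB : R ⊆ B.1 := Finset.inter_subset_right
    have hfil := htwo R hcap ⟨A.1, A.2, hsubA⟩
    have hAB' : A.1 ≠ B.1 := fun h => hAB (Subtype.ext h)
    have hset : ({A.1, B.1} : Finset (Finset V)) = facets.filter (fun T => R ⊆ T) := by
      apply Finset.eq_of_subset_of_card_le
      · intro T hT
        simp only [Finset.mem_insert, Finset.mem_singleton] at hT
        rcases hT with rfl | rfl
        · simp [A.2, hsubA]
        · simp [B.2, hsubB]
      · rw [hfil, Finset.card_insert_of_notMem (by simpa using hAB'),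
          Finset.card_singleton]
    refine ⟨bdryEntry_ne_zero hsubA (by rw [Finset.card_sdiff_of_subset hsubA, hpure A.1 A.2, hcap]),
      bdryEntry_ne_zero hsubB (by rw [Finset.card_sdiff_of_subset hsubB, hpure B.1 B.2, hcap]), ?_⟩
    intro S hSa hSb
    by_contra hS
    obtain ⟨hsub', _⟩ := bdryEntry_of_ne_zero hS
    have : S.1 ∈ facets.filter (fun T => R ⊆ T) := by simp [S.2, hsub']
    rw [← hset] at this
    simp only [Finset.mem_insert, Finset.mem_singleton] at this
    rcases this with h' | h'
    · exact hSa (Subtype.ext h')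
    · exact hSb (Subtype.ext h')
  -- the per-q count
  have hcount : ∀ q : ℕ, 1 ≤ q →
      Nat.card {x : F → ZMod q //
          (∀ R : Finset V, ∑ S : F, (bdryEntry S.1 R : ZMod q) * x S = 0) ∧
          ∀ S, x S ≠ 0} = if q % 2 = 1 then 0 else 1 := by
    intro q hq
    haveI : NeZero q := ⟨by omega⟩
    have step : ∀ (x : F → ZMod q),
        (∀ R : Finset V, ∑ S : F, (bdryEntry S.1 R : ZMod q) * x S = 0) →
        ∀ A B : F, A ≠ B → (A.1 ∩ B.1).card = 2 →
        x B = x A ∨ x B = -x A := by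
      intro x hx A B hAB hcap
      obtain ⟨hA, hB, hoth⟩ := pairAB A B hAB hcap
      have hsum := hx (A.1 ∩ B.1)
      rw [Finset.sum_eq_add_of_mem A B (Finset.mem_univ _) (Finset.mem_univ _) hAB
        (fun C _ hC => by rw [hoth C hC.1 hC.2]; simp)] at hsum
      rcases bdryEntry_cases A.1 (A.1 ∩ B.1) with h | h | h <;>
        rcases bdryEntry_cases B.1 (A.1 ∩ B.1) with h' | h' | h' <;>
          [skip; skip; skip; skip; skip; skip; skip; skip; skip] <;>
          first
          | exact absurd h hA
          | exact absurd h' hB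
          | (rw [h, h'] at hsum; push_cast at hsum;
             first
             | exact Or.inl (by linear_combination hsum)
             | exact Or.inl (by linear_combination -hsum)
             | exact Or.inr (by linear_combination hsum)
             | exact Or.inr (by linear_combination -hsum))
    have prop : ∀ (x : F → ZMod q),
        (∀ R : Finset V, ∑ S : F, (bdryEntry S.1 R : ZMod q) * x S = 0) →
        ∀ T : F, x T = x S₀ ∨ x T = -x S₀ := by
      intro x hx T
      have h := hconn S₀ T
      induction h with
      | refl => exact Or.inl rfl
      | tail _ hbc ih =>
        rcases step x hx _ _ hbc.1 hbc.2 with h1 | h1 <;> rcases ih with h2 | h2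
        · exact Or.inl (h1.trans h2)
        · exact Or.inr (h1.trans h2)
        · exact Or.inr (by rw [h1, h2])
        · exact Or.inl (by rw [h1, h2, neg_neg])
    have key : ∀ (x : F → ZMod q),
        (∀ R : Finset V, ∑ S : F, (bdryEntry S.1 R : ZMod q) * x S = 0) →
        (x S₀ + x S₀ = 0 ∧ ∀ T, x T = x S₀) := by
      intro x hx
      have h2 : x S₀ + x S₀ = 0 := by
        by_contra h2
        set ε : F → ℤ := fun S => if x S = x S₀ then 1 else -1 with hε
        have hxε : ∀ S : F, x S = ((ε S : ℤ) : ZMod q) * x S₀ := by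
          intro S
          by_cases hS : x S = x S₀
          · simp [hε, hS]
          · rcases prop x hx S with h | h
            · exact absurd h hS
            · have : ε S = -1 := by simp [hε, hS]
              rw [this, h]
              push_cast
              ring
        have hflow : ∀ R : Finset V, ∑ S : F, bdryEntry S.1 R * ε S = 0 := by
          intro R
          rcases pair R with hall | ⟨A, B, hAB, hA, hB, hoth⟩
          · exact Finset.sum_eq_zero (fun S _ => by rw [hall S, zero_mul])
          · rw [Finset.sum_eq_add_of_mem A B (Finset.mem_univ _) (Finset.mem_univ _) hAB
              (fun C _ hC => by rw [hoth C hC.1 hC.2, zero_mul])]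
            have hsum := hx R
            rw [Finset.sum_eq_add_of_mem A B (Finset.mem_univ _) (Finset.mem_univ _) hAB
              (fun C _ hC => by rw [hoth C hC.1 hC.2]; simp)] at hsum
            rw [hxε A, hxε B] at hsum
            have hsum' : ((bdryEntry A.1 R * ε A + bdryEntry B.1 R * ε B : ℤ) : ZMod q)
                * x S₀ = 0 := by
              push_cast
              linear_combination hsum
            set N : ℤ := bdryEntry A.1 R * ε A + bdryEntry B.1 R * ε B with hN
            have hεA : ε A = 1 ∨ ε A = -1 := by
              by_cases h : x A = x S₀ <;> simp [hε, h]
            have hεB : ε B = 1 ∨ ε B = -1 := by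
              by_cases h : x B = x S₀ <;> simp [hε, h]
            have hNval : N = 0 ∨ N = 2 ∨ N = -2 := by
              rcases bdryEntry_cases A.1 R with h | h | h <;>
                rcases bdryEntry_cases B.1 R with h' | h' | h' <;>
                  first
                  | exact absurd h hA
                  | exact absurd h' hB
                  | (rcases hεA with hA1 | hA1 <;> rcases hεB with hB1 | hB1 <;>
                      rw [hN, h, h', hA1, hB1] <;> norm_num)
            rcases hNval with h0 | h0 | h0
            · exact h0
            · exfalso
              apply h2
              rw [h0] at hsum'
              push_cast at hsum'
              linear_combination hsum'
            · exfalso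
              apply h2
              rw [h0] at hsum'
              push_cast at hsum'
              linear_combination -hsum'
        have hε0 := hnonorient ε hflow
        have hone : ε S₀ = 1 := by simp [hε]
        rw [hε0] at hone
        simp at hone
      refine ⟨h2, fun T => ?_⟩
      rcases prop x hx T with h | h
      · exact h
      · rw [h]
        exact neg_eq_of_add_eq_zero_left h2
    have conv : ∀ a : ZMod q, a + a = 0 →
        ∀ R : Finset V, ∑ S : F, (bdryEntry S.1 R : ZMod q) * a = 0 := by
      intro a ha R
      rcases pair R with hall | ⟨A, B, hAB, hA, hB, hoth⟩
      · exact Finset.sum_eq_zero (fun S _ => by rw [hall S]; simp)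
      · rw [Finset.sum_eq_add_of_mem (f := fun S : F => (bdryEntry S.1 R : ZMod q) * a)
          A B (Finset.mem_univ _) (Finset.mem_univ _) hAB
          (fun C _ hC => by
            show (bdryEntry C.1 R : ZMod q) * a = 0
            rw [hoth C hC.1 hC.2]; simp)]
        rcases bdryEntry_cases A.1 R with h | h | h <;>
          rcases bdryEntry_cases B.1 R with h' | h' | h' <;>
            first
            | exact absurd h hA
            | exact absurd h' hB
            | (rw [h, h']; push_cast;
               first
               | linear_combination ha
               | linear_combination -ha
               | ring)
    have e : {x : F → ZMod q //
          (∀ R : Finset V, ∑ S : F, (bdryEntry S.1 R : ZMod q) * x S = 0) ∧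
          ∀ S, x S ≠ 0} ≃ {a : ZMod q // a + a = 0 ∧ a ≠ 0} :=
      { toFun := fun x => ⟨x.1 S₀, (key x.1 x.2.1).1, x.2.2 S₀⟩
        invFun := fun a => ⟨fun _ => a.1, conv a.1 a.2.1, fun _ => a.2.2⟩
        left_inv := fun x => Subtype.ext (funext fun T => ((key x.1 x.2.1).2 T).symm)
        right_inv := fun a => rfl }
    rw [Nat.card_congr e]
    exact zmod_two_torsion_count q hq
  refine ⟨hcount, ?_⟩
  rintro ⟨P, hP⟩
  have hodd : ∀ k : ℕ, P.eval ((2 * k + 1 : ℕ) : ℚ) = 0 := by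
    intro k
    have h1 := hP (2 * k + 1) (by omega)
    rw [hcount (2 * k + 1) (by omega), if_pos (by omega)] at h1
    exact_mod_cast h1.symm
  have hP0 : P = 0 := by
    apply Polynomial.eq_zero_of_infinite_isRoot
    have hinj : Function.Injective (fun k : ℕ => ((2 * k + 1 : ℕ) : ℚ)) := by
      intro a b h
      simp only [Nat.cast_add, Nat.cast_mul, Nat.cast_ofNat, Nat.cast_one] at h
      have : (a : ℚ) = b := by linarith
      exact_mod_cast this
    exact (Set.infinite_range_of_injective hinj).mono
      (by rintro x ⟨k, rfl⟩; exact hodd k)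
  have h2 := hP 2 (by norm_num)
  rw [hcount 2 (by norm_num), if_neg (by norm_num), hP0] at h2
  simp at h2
end

section
/- Let M be an integer matrix with column set E such that every square submatrix has determinant of absolute value at most B, and let q > B be prime. Then a subset of columns of M is linearly independent over Q if and only if its reduction mod q is linearly independent over F_q; consequently the column matroid of M over Q equals that of its reduction mod q. -/
open Matrix

/-- Over a field, the columns of a matrix with `n` columns are linearly independent iff
some `n × n` submatrix (choice of `n` rows) has nonzero determinant. -/
lemma cols_linearIndependent_iff_exists_det_ne_zero
    {K : Type*} [Field K] {m : Type*} [Fintype m] {n : ℕ} (M : Matrix m (Fin n) K) :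
    LinearIndependent K (fun j : Fin n => fun i : m => M i j) ↔
      ∃ f : Fin n → m, (M.submatrix f id).det ≠ 0 := by
  classical
  constructor
  · intro h
    have hT : LinearIndependent K (fun j : Fin n => Mᵀ j) := by
      convert h using 1
      funext j i; rfl
    have hrank : (Mᵀ).rank = n := by
      have := LinearIndependent.rank_matrix (M := Mᵀ) hT; rw [this]; simp
    have hrankM : M.rank = n := by rw [← Matrix.rank_transpose]; exact hrank
    have hspan : Submodule.span K (Set.range M) = ⊤ := by
      apply Submodule.eq_top_of_finrank_eq
      rw [show Set.range M = Set.range M.row from rfl, ← Matrix.rank_eq_finrank_span_row M, hrankM]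
      simp [Module.finrank_fintype_fun_eq_card]
    obtain ⟨b, hbsub, hbspan, hbind⟩ := exists_linearIndependent K (Set.range M)
    rw [hspan] at hbspan
    have hbasis : Module.Basis b K (Fin n → K) :=
      Module.Basis.mk hbind (by rw [Subtype.range_coe, hbspan])
    haveI : Fintype b := FiniteDimensional.fintypeBasisIndex hbasis
    have hcard : Fintype.card b = n := by
      have := Module.finrank_eq_card_basis hbasis
      simpa [Module.finrank_fintype_fun_eq_card] using this.symm
    let e : Fin n ≃ b := (Fintype.equivFinOfCardEq hcard).symm
    have hchoose : ∀ k : Fin n, ∃ i : m, M i = (e k : Fin n → K) := fun k =>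
      hbsub (e k).2
    choose f hf using hchoose
    refine ⟨f, ?_⟩
    have hrows : LinearIndependent K (fun k : Fin n => (M.submatrix f id) k) := by
      have : LinearIndependent K (fun k : Fin n => ((e k : Fin n → K))) :=
        hbind.comp e e.injective
      convert this using 1
      funext k
      exact hf k
    have : IsUnit (M.submatrix f id) :=
      Matrix.linearIndependent_rows_iff_isUnit.mp hrows
    exact isUnit_iff_ne_zero.mp ((Matrix.isUnit_iff_isUnit_det _).mp this)
  · rintro ⟨f, hf⟩
    have hcols : LinearIndependent K (fun j : Fin n => (M.submatrix f id)ᵀ j) :=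
      Matrix.linearIndependent_cols_iff_isUnit.mpr
        ((Matrix.isUnit_iff_isUnit_det _).mpr (isUnit_iff_ne_zero.mpr hf))
    apply LinearIndependent.of_comp (LinearMap.funLeft K K f)
    convert hcols using 1
    funext j i; rfl

/-- Let `A` be an integer matrix all of whose square submatrices have determinant of
absolute value at most `B`, and let `q > B` be prime.  Then a set of columns of `A` is
linearly independent over `ℚ` iff its reduction mod `q` is linearly independent over
`F_q`; consequently the column matroid of `A` over `ℚ` equals that of its reduction. -/
theorem linearIndependent_iff_mod_q {m E : Type*} [Fintype m] [Fintype E]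
    (A : Matrix m E ℤ) (B : ℤ)
    (hB : ∀ (k : ℕ) (f : Fin k → m) (g : Fin k → E), |(A.submatrix f g).det| ≤ B)
    (q : ℕ) (hq : q.Prime) (hqB : B < (q : ℤ)) (S : Finset E) :
    LinearIndependent ℚ (fun e : S => fun i : m => (A i e : ℚ)) ↔
      LinearIndependent (ZMod q) (fun e : S => fun i : m => ((A i e : ℤ) : ZMod q)) := by
  classical
  haveI : Fact q.Prime := ⟨hq⟩
  set n := S.card with hn
  set g : Fin n → E := fun k => ((S.equivFin.symm k : S) : E) with hg
  -- reindex via the equivalence S ≃ Fin n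
  have hreQ : LinearIndependent ℚ (fun e : S => fun i : m => (A i e : ℚ)) ↔
      LinearIndependent ℚ (fun k : Fin n => fun i : m => (A i (g k) : ℚ)) :=
    (linearIndependent_equiv S.equivFin.symm).symm
  have hreZ : LinearIndependent (ZMod q) (fun e : S => fun i : m => ((A i e : ℤ) : ZMod q)) ↔
      LinearIndependent (ZMod q)
        (fun k : Fin n => fun i : m => ((A i (g k) : ℤ) : ZMod q)) :=
    (linearIndependent_equiv S.equivFin.symm).symm
  rw [hreQ, hreZ]
  rw [cols_linearIndependent_iff_exists_det_ne_zero
      (M := fun i k => ((A i (g k) : ℤ) : ℚ)),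
    cols_linearIndependent_iff_exists_det_ne_zero
      (M := fun i k => ((A i (g k) : ℤ) : ZMod q))]
  apply exists_congr
  intro f
  have hdQ : Matrix.submatrix (fun i k => ((A i (g k) : ℤ) : ℚ)) f id
      = (A.submatrix f g).map (Int.cast : ℤ → ℚ) := rfl
  have hdZ : Matrix.submatrix (fun i k => ((A i (g k) : ℤ) : ZMod q)) f id
      = (A.submatrix f g).map (Int.cast : ℤ → ZMod q) := rfl
  rw [hdQ, hdZ]
  have hQ : ((A.submatrix f g).map (Int.cast : ℤ → ℚ)).det
      = (((A.submatrix f g).det : ℤ) : ℚ) :=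
    ((RingHom.map_det (Int.castRingHom ℚ) (A.submatrix f g))).symm
  have hZ : ((A.submatrix f g).map (Int.cast : ℤ → ZMod q)).det
      = (((A.submatrix f g).det : ℤ) : ZMod q) :=
    ((RingHom.map_det (Int.castRingHom (ZMod q)) (A.submatrix f g))).symm
  rw [hQ, hZ]
  set d : ℤ := (A.submatrix f g).det with hd
  constructor
  · intro hdq h0
    apply hdq
    rw [ZMod.intCast_zmod_eq_zero_iff_dvd] at h0
    have hdle : |d| ≤ B := hB n f g
    by_contra hne
    have hdne : d ≠ 0 := by
      intro hz; apply hdq; rw [hz]; simp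
    have : (q : ℤ) ≤ |d| := Int.le_of_dvd (abs_pos.mpr hdne) ((dvd_abs _ _).mpr h0)
    omega
  · intro hdq h0
    apply hdq
    rw [Int.cast_eq_zero] at h0
    rw [h0]
    simp
end
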